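/- Let K : (0,∞) → [0,∞) with K ∈ L¹(0,∞) and t^{β₀}·K(t) ∈ L¹(0,∞) for some β₀ > 0. Then with γ₀,₁ = min{β₀, 1}, one has |K_sin(ω)| ≤ c₂ ω^{γ₀,₁} for all ω > 0, where K_sin(ω) = ∫₀^∞ K(t) sin(ωt) dt. -/

import Mathlib

open MeasureTheory Filter Set Real

lemma sin_abs_le_rpow {γ : ℝ} (hγ0 : 0 < γ) (hγ1 : γ ≤ 1) {x : ℝ} (hx : 0 ≤ x) :
    |Real.sin x| ≤ x ^ γ := by
  rcases le_or_gt x 1 with h | h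
  · rcases eq_or_lt_of_le hx with h0 | h0
    · simp [← h0, Real.zero_rpow hγ0.ne']
    · calc |Real.sin x| ≤ |x| := Real.abs_sin_le_abs
        _ = x ^ (1:ℝ) := by rw [abs_of_nonneg hx, Real.rpow_one]
        _ ≤ x ^ γ := Real.rpow_le_rpow_of_exponent_ge h0 h hγ1
  · calc |Real.sin x| ≤ 1 := Real.abs_sin_le_one x
      _ ≤ x ^ γ := Real.one_le_rpow h.le hγ0.le

theorem stmt_6 (K : ℝ → ℝ) (β₀ : ℝ) (hβ₀ : 0 < β₀)
    (hKnonneg : ∀ t ∈ Ioi (0:ℝ), 0 ≤ K t)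
    (hint : IntegrableOn K (Ioi 0))
    (hintβ : IntegrableOn (fun t => t ^ β₀ * K t) (Ioi 0)) :
    ∃ c₂ > (0:ℝ), ∀ ω > (0:ℝ),
      |∫ t in Ioi (0:ℝ), K t * Real.sin (ω * t)| ≤ c₂ * ω ^ min β₀ 1 := by
  set γ := min β₀ 1 with hγdef
  have hγ0 : 0 < γ := lt_min hβ₀ one_pos
  have hγ1 : γ ≤ 1 := min_le_right _ _
  have hγβ : γ ≤ β₀ := min_le_left _ _
  -- integrability of t^γ * K t
  have hmeas : AEStronglyMeasurable (fun t => t ^ γ * K t) (volume.restrict (Ioi 0)) := by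
    exact ((measurable_id.pow_const γ).aestronglyMeasurable).mul hint.aestronglyMeasurable
  have hγint : IntegrableOn (fun t => t ^ γ * K t) (Ioi 0) := by
    refine Integrable.mono (hint.add hintβ) hmeas ?_
    filter_upwards [ae_restrict_mem measurableSet_Ioi] with t ht
    have ht0 : (0:ℝ) < t := ht
    have hK0 : 0 ≤ K t := hKnonneg t ht
    have htγ : t ^ γ ≤ 1 + t ^ β₀ := by
      rcases le_or_gt t 1 with h | h
      · have : t ^ γ ≤ 1 := Real.rpow_le_one ht0.le h hγ0.le
        nlinarith [Real.rpow_nonneg ht0.le β₀]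
      · have : t ^ γ ≤ t ^ β₀ := Real.rpow_le_rpow_of_exponent_le h.le hγβ
        linarith
    have h1 : t ^ γ * K t ≤ K t + t ^ β₀ * K t := by nlinarith
    have h2 : 0 ≤ t ^ γ * K t := mul_nonneg (Real.rpow_nonneg ht0.le γ) hK0
    simp only [Real.norm_eq_abs, Pi.add_apply]
    rw [abs_of_nonneg h2, abs_of_nonneg (by nlinarith [Real.rpow_nonneg ht0.le β₀] : (0:ℝ) ≤ K t + t ^ β₀ * K t)]
    exact h1
  set I := ∫ t in Ioi (0:ℝ), t ^ γ * K t with hIdef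
  have hI0 : 0 ≤ I := by
    apply setIntegral_nonneg measurableSet_Ioi
    intro t ht
    exact mul_nonneg (Real.rpow_nonneg (le_of_lt ht) γ) (hKnonneg t ht)
  refine ⟨I + 1, by linarith, fun ω hω => ?_⟩
  have key : ‖∫ t in Ioi (0:ℝ), K t * Real.sin (ω * t)‖
      ≤ ∫ t in Ioi (0:ℝ), ω ^ γ * (t ^ γ * K t) := by
    refine norm_integral_le_of_norm_le (hγint.const_mul _) ?_
    filter_upwards [ae_restrict_mem measurableSet_Ioi] with t ht
    have ht0 : (0:ℝ) < t := ht
    have hK0 : 0 ≤ K t := hKnonneg t ht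
    have hs : |Real.sin (ω * t)| ≤ (ω * t) ^ γ :=
      sin_abs_le_rpow hγ0 hγ1 (by positivity)
    calc ‖K t * Real.sin (ω * t)‖ = K t * |Real.sin (ω * t)| := by
          rw [Real.norm_eq_abs, abs_mul, abs_of_nonneg hK0]
      _ ≤ K t * (ω * t) ^ γ := by
          exact mul_le_mul_of_nonneg_left hs hK0
      _ = ω ^ γ * (t ^ γ * K t) := by
          rw [Real.mul_rpow hω.le ht0.le]; ring
  rw [Real.norm_eq_abs] at key
  calc |∫ t in Ioi (0:ℝ), K t * Real.sin (ω * t)|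
      ≤ ∫ t in Ioi (0:ℝ), ω ^ γ * (t ^ γ * K t) := key
    _ = ω ^ γ * I := by rw [integral_const_mul]
    _ ≤ (I + 1) * ω ^ γ := by
        have : (0:ℝ) ≤ ω ^ γ := Real.rpow_nonneg hω.le γ
        nlinarith
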